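/- arXiv:1308.3904 — 2 statements merged into one kernel-verified Lean document; each statement's English description precedes it below -/
import Mathlib

section
/- Let j be a gauge function as above on ℝ⁴, let α ∈ (1,2), H(x) = j(x)^α, and let z be a σ-periodic solution of ż(t) = J·∇H(z(t)) with H(z(t)) = 1 for all t, with fundamental solution γ (γ(0) = I, γ'(t) = J·H''(z(t))·γ(t)). Then there exist a real symplectic matrix P ∈ Sp(4,ℝ) and a real symplectic matrix M ∈ Sp(2,ℝ) such that γ(σ) = P⁻¹·N·P, where N is the 4×4 matrix which, in the coordinate ordering (q₁, q₂, p₁, p₂), acts as the Jordan block [[1,1],[0,1]] on the (q₁,p₁)-coordinates and as M on the (q₂,p₂)-coordinates; explicitly N₁₁ = N₃₃ = N₁₃ = 1, N₂₂ = M₁₁, N₂₄ = M₁₂, N₄₂ = M₂₁, N₄₄ = M₂₂, and all other entries of N are 0. -/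
/-- The standard symplectic matrix `J = [[0, -I_n],[I_n, 0]]` acting on `ℝ^{2n}`. -/
noncomputable def Jmap (n : ℕ) (x : EuclideanSpace ℝ (Fin (2 * n))) :
    EuclideanSpace ℝ (Fin (2 * n)) :=
  WithLp.toLp 2 fun i => if h : (i : ℕ) < n then -x ⟨(i : ℕ) + n, by omega⟩
           else x ⟨(i : ℕ) - n, by have := i.isLt; omega⟩

/-- `j` is the gauge function of a `C³` compact hypersurface in `ℝ^{2n}` strictly star-shaped
with respect to the origin: positively homogeneous of degree 1, positive away from `0`,
vanishing at `0`, and `C³` on `ℝ^{2n} ∖ {0}`. -/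
def IsGauge (n : ℕ) (j : EuclideanSpace ℝ (Fin (2 * n)) → ℝ) : Prop :=
  (∀ t : ℝ, 0 < t → ∀ x, j (t • x) = t * j x) ∧
  (∀ x, x ≠ 0 → 0 < j x) ∧
  j 0 = 0 ∧
  ContDiffOn ℝ 3 j {(0 : EuclideanSpace ℝ (Fin (2 * n)))}ᶜ

/-- `(τ, y)` is a closed characteristic on `Σ = j⁻¹(1)`:
`τ > 0`, `ẏ(t) = J·∇j(y(t))`, `j(y(t)) = 1` and `y(t + τ) = y(t)` for all `t`. -/
def IsClosedCharacteristic (n : ℕ) (j : EuclideanSpace ℝ (Fin (2 * n)) → ℝ)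
    (τ : ℝ) (y : ℝ → EuclideanSpace ℝ (Fin (2 * n))) : Prop :=
  0 < τ ∧
  (∀ t : ℝ, HasDerivAt y (Jmap n (gradient j (y t))) t) ∧
  (∀ t : ℝ, j (y t) = 1) ∧
  (∀ t : ℝ, y (t + τ) = y t)


/-- The standard symplectic matrix `J = [[0, -I_n],[I_n, 0]]` as a `2n × 2n` matrix. -/
def Jmat (n : ℕ) : Matrix (Fin (2 * n)) (Fin (2 * n)) ℝ :=
  Matrix.of fun i k => if (i : ℕ) + n = (k : ℕ) then -1 else if (k : ℕ) + n = (i : ℕ) then 1 else 0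

/-- Membership in the real symplectic group `Sp(2n, ℝ)`: `Aᵀ·J·A = J`. -/
def IsSymplecticMat (n : ℕ) (A : Matrix (Fin (2 * n)) (Fin (2 * n)) ℝ) : Prop :=
  A.transpose * Jmat n * A = Jmat n

/-- The Hessian matrix of `H` at `x`, with entries the second partial derivatives. -/
noncomputable def hessMatrix (m : ℕ) (H : EuclideanSpace ℝ (Fin m) → ℝ)
    (x : EuclideanSpace ℝ (Fin m)) : Matrix (Fin m) (Fin m) ℝ :=
  Matrix.of fun i k =>
    fderiv ℝ (fun y => fderiv ℝ H y (EuclideanSpace.single k 1)) x (EuclideanSpace.single i 1)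

/-- In coordinates `(q₁, q₂, p₁, p₂)`, the `4 × 4` matrix acting as the Jordan block
`[[1,1],[0,1]]` on the `(q₁,p₁)`-coordinates and as `M` on the `(q₂,p₂)`-coordinates. -/
def Nmat (M : Matrix (Fin 2) (Fin 2) ℝ) : Matrix (Fin 4) (Fin 4) ℝ :=
  !![1, 0,     1, 0;
     0, M 0 0, 0, M 0 1;
     0, 0,     1, 0;
     0, M 1 0, 0, M 1 1]

section MonodromyHelpers
open Matrix
def J4 : Matrix (Fin 4) (Fin 4) ℝ := Jmat 2
noncomputable def om (x y : Fin 4 → ℝ) : ℝ := x ⬝ᵥ (J4 *ᵥ y)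

lemma J4_mul_J4 : J4 * J4 = -1 := by
  ext i k
  fin_cases i <;> fin_cases k <;>
    simp [J4, Jmat, Matrix.mul_apply, Fin.sum_univ_four, Matrix.one_apply,
      show ((3:Fin 4):ℕ) = 3 from rfl]

lemma J4_transpose : J4ᵀ = -J4 := by
  ext i k
  fin_cases i <;> fin_cases k <;> simp [J4, Jmat, show ((3:Fin 4):ℕ) = 3 from rfl]

lemma om_add_right (x y z : Fin 4 → ℝ) : om x (y + z) = om x y + om x z := by
  simp [om, Matrix.mulVec_add, dotProduct_add]
lemma om_smul_right (c : ℝ) (x y : Fin 4 → ℝ) : om x (c • y) = c * om x y := by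
  simp [om, Matrix.mulVec_smul, dotProduct_smul]
lemma om_add_left (x y z : Fin 4 → ℝ) : om (x + y) z = om x z + om y z := by
  simp [om, add_dotProduct]
lemma om_smul_left (c : ℝ) (x y : Fin 4 → ℝ) : om (c • x) y = c * om x y := by
  simp [om, smul_dotProduct]
lemma om_sub_right (x y z : Fin 4 → ℝ) : om x (y - z) = om x y - om x z := by
  simp [om, Matrix.mulVec_sub, dotProduct_sub]
lemma om_sub_left (x y z : Fin 4 → ℝ) : om (x - y) z = om x z - om y z := by
  simp [om, sub_dotProduct]
lemma om_neg (x y : Fin 4 → ℝ) : om x y = - om y x := by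
  have h1 : om x y = (J4ᵀ *ᵥ x) ⬝ᵥ y := by
    rw [om, Matrix.dotProduct_mulVec, ← Matrix.vecMul_transpose, Matrix.transpose_transpose]
  rw [h1, J4_transpose, Matrix.neg_mulVec, neg_dotProduct, dotProduct_comm, om]
lemma om_self (x : Fin 4 → ℝ) : om x x = 0 := by
  have := om_neg x x; linarith
lemma om_single (i k : Fin 4) : om (Pi.single i 1) (Pi.single k 1) = J4 i k := by
  simp [om, Matrix.mulVec_single, dotProduct, Pi.single_apply]

lemma mulVec_dot (G : Matrix (Fin 4) (Fin 4) ℝ) (x w : Fin 4 → ℝ) :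
    (G *ᵥ x) ⬝ᵥ w = x ⬝ᵥ (Gᵀ *ᵥ w) := by
  rw [dotProduct_comm, Matrix.dotProduct_mulVec, dotProduct_comm, Matrix.mulVec_transpose]

lemma om_symp {G : Matrix (Fin 4) (Fin 4) ℝ} (hG : Gᵀ * J4 * G = J4) (x y : Fin 4 → ℝ) :
    om (G *ᵥ x) (G *ᵥ y) = om x y := by
  rw [om, Matrix.mulVec_mulVec, mulVec_dot, Matrix.mulVec_mulVec, ← Matrix.mul_assoc, hG, om]

lemma exists_pi_ne (e f : Fin 4 → ℝ) (hef : om e f = -1) :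
    ∃ c : Fin 4 → ℝ, c - om f c • e + om e c • f ≠ 0 := by
  by_contra hcon
  push_neg at hcon
  set a : Fin 4 → ℝ := fun i => om f (Pi.single i 1) with ha
  set b : Fin 4 → ℝ := fun i => om e (Pi.single i 1) with hb
  have hrep : ∀ i : Fin 4, (Pi.single i (1:ℝ) : Fin 4 → ℝ) = a i • e - b i • f := by
    intro i
    have h2 : Pi.single i (1:ℝ) - a i • e + b i • f = 0 := hcon (Pi.single i 1)
    funext x
    have := congr_fun h2 x
    simp at this ⊢
    linarith [this]
  have key : ∀ i k : Fin 4, J4 i k = a i * b k - b i * a k := by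
    intro i k
    rw [← om_single i k, hrep i, hrep k]
    rw [om_sub_right, om_smul_right, om_smul_right, om_sub_left, om_sub_left,
      om_smul_left, om_smul_left, om_smul_left, om_smul_left]
    rw [om_self, om_self, hef, show om f e = 1 by rw [om_neg, hef]; norm_num]
    ring
  have pl : (a 0*b 1 - b 0*a 1)*(a 2*b 3 - b 2*a 3)
      - (a 0*b 2 - b 0*a 2)*(a 1*b 3 - b 1*a 3)
      + (a 0*b 3 - b 0*a 3)*(a 1*b 2 - b 1*a 2) = 0 := by ring
  rw [← key 0 1, ← key 2 3, ← key 0 2, ← key 1 3, ← key 0 3, ← key 1 2] at pl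
  simp [J4, Jmat, show ((3:Fin 4):ℕ) = 3 from rfl] at pl

lemma sp2_of_det (M : Matrix (Fin 2) (Fin 2) ℝ) (h : M 0 0 * M 1 1 - M 0 1 * M 1 0 = 1) :
    Mᵀ * Jmat 1 * M = Jmat 1 := by
  ext i k
  fin_cases i <;> fin_cases k <;>
    simp [Jmat, Matrix.mul_apply, Fin.sum_univ_two] <;> linarith [h]

lemma symp_normal_form (G : Matrix (Fin 4) (Fin 4) ℝ) (hG : Gᵀ * J4 * G = J4)
    (e f : Fin 4 → ℝ) (hef : om e f = -1)
    (hGe : G *ᵥ e = e) (hGf : G *ᵥ f = f + e) :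
    ∃ (P : Matrix (Fin 4) (Fin 4) ℝ) (M : Matrix (Fin 2) (Fin 2) ℝ),
      Pᵀ * J4 * P = J4 ∧ Mᵀ * Jmat 1 * M = Jmat 1 ∧ G = P⁻¹ * Nmat M * P := by
  have hfe : om f e = 1 := by rw [om_neg, hef]; norm_num
  obtain ⟨c, hc⟩ := exists_pi_ne e f hef
  set e2 : Fin 4 → ℝ := c - om f c • e + om e c • f with he2def
  have hee2 : om e e2 = 0 := by
    rw [he2def, om_add_right, om_sub_right, om_smul_right, om_smul_right, om_self, hef]; ring
  have hfe2 : om f e2 = 0 := by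
    rw [he2def, om_add_right, om_sub_right, om_smul_right, om_smul_right, om_self, hfe]; ring
  have he2e : om e2 e = 0 := by rw [om_neg, hee2]; ring
  have he2f : om e2 f = 0 := by rw [om_neg, hfe2]; ring
  set κ : ℝ := e2 ⬝ᵥ e2 with hκdef
  have hκ : 0 < κ := by
    have hex : ∃ i, e2 i ≠ 0 := by
      by_contra hno; push_neg at hno; exact hc (funext hno)
    obtain ⟨i, hi⟩ := hex
    rw [hκdef]
    have : (e2 ⬝ᵥ e2) = ∑ a, e2 a * e2 a := rfl
    rw [this]
    apply Finset.sum_pos' (fun a _ => mul_self_nonneg (e2 a))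
    exact ⟨i, Finset.mem_univ i, mul_self_pos.mpr hi⟩
  set v3 : Fin 4 → ℝ := -(J4 *ᵥ e2) with hv3def
  have homv3 : om e2 v3 = κ := by
    rw [hv3def, om, Matrix.mulVec_neg, Matrix.mulVec_mulVec, J4_mul_J4]
    rw [show ((-1 : Matrix (Fin 4) (Fin 4) ℝ)) *ᵥ e2 = -e2 by
      rw [show ((-1 : Matrix (Fin 4) (Fin 4) ℝ)) = -(1 : Matrix (Fin 4) (Fin 4) ℝ) from rfl,
        Matrix.neg_mulVec, Matrix.one_mulVec]]
    simp [hκdef]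
  set f2 : Fin 4 → ℝ := (-1/κ) • (v3 - om f v3 • e + om e v3 • f) with hf2def
  have hef2 : om e f2 = 0 := by
    rw [hf2def, om_smul_right, om_add_right, om_sub_right, om_smul_right, om_smul_right,
      om_self, hef]; ring
  have hff2 : om f f2 = 0 := by
    rw [hf2def, om_smul_right, om_add_right, om_sub_right, om_smul_right, om_smul_right,
      om_self, hfe]; ring
  have he2f2 : om e2 f2 = -1 := by
    rw [hf2def, om_smul_right, om_add_right, om_sub_right, om_smul_right, om_smul_right,
      he2e, he2f, homv3]
    field_simp
    ring
  have hf2e2 : om f2 e2 = 1 := by rw [om_neg, he2f2]; norm_num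
  have hf2e : om f2 e = 0 := by rw [om_neg, hef2]; ring
  have hf2f : om f2 f = 0 := by rw [om_neg, hff2]; ring
  -- the matrix Q with columns e, e2, f, f2
  set Q : Matrix (Fin 4) (Fin 4) ℝ := Matrix.of (fun i k => ![e, e2, f, f2] k i) with hQdef
  have hQcol : ∀ k, (fun a => Q a k) = ![e, e2, f, f2] k := fun k => rfl
  have hQJQ : ∀ i k : Fin 4, (Qᵀ * J4 * Q) i k = om (fun a => Q a i) (fun a => Q a k) := by
    intro i k
    have h1 : (Qᵀ * J4 * Q) i k = ∑ b, ∑ a, Q a i * J4 a b * Q b k := by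
      simp only [Matrix.mul_apply, Matrix.transpose_apply, Finset.sum_mul]
    rw [h1, Finset.sum_comm]
    simp only [om, dotProduct, Matrix.mulVec, Finset.mul_sum]
    exact Finset.sum_congr rfl fun a _ => Finset.sum_congr rfl fun b _ => by ring
  have hQ : Qᵀ * J4 * Q = J4 := by
    ext i k
    rw [hQJQ]
    fin_cases i <;> fin_cases k <;>
      simp only [hQcol, Matrix.cons_val_zero, Matrix.cons_val_one, Matrix.head_cons,
        Matrix.cons_val_two, Matrix.tail_cons, Matrix.cons_val_three] <;>
      simp [J4, Jmat, om_self, hef, hfe, hee2, hfe2, he2e, he2f, hef2, hff2, he2f2, hf2e2,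
        hf2e, hf2f, show ((3:Fin 4):ℕ) = 3 from rfl]
  set B : Matrix (Fin 4) (Fin 4) ℝ := (-J4) * Qᵀ * J4 with hBdef
  have hBQ : B * Q = 1 := by
    have h1 : B * Q = (-J4) * (Qᵀ * J4 * Q) := by
      rw [hBdef, Matrix.mul_assoc, Matrix.mul_assoc, Matrix.mul_assoc]
    rw [h1, hQ, Matrix.neg_mul, J4_mul_J4]; simp
  have hQB : Q * B = 1 := mul_eq_one_comm.mp hBQ
  have hQdet : IsUnit Q.det := Matrix.isUnit_det_of_left_inverse hBQ
  have hQinv : Q⁻¹ = B := Matrix.inv_eq_left_inv hBQ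
  -- symplectic preservation by G
  have hpres := om_symp hG
  -- G maps W to W
  have hGe2W1 : om e (G *ᵥ e2) = 0 := by
    conv_lhs => rw [← hGe]
    rw [hpres]; exact hee2
  have hGe2W2 : om f (G *ᵥ e2) = 0 := by
    have h := hpres f e2
    rw [hGf, om_add_left, hGe2W1, hfe2] at h
    linarith
  have hGf2W1 : om e (G *ᵥ f2) = 0 := by
    conv_lhs => rw [← hGe]
    rw [hpres]; exact hef2
  have hGf2W2 : om f (G *ᵥ f2) = 0 := by
    have h := hpres f f2
    rw [hGf, om_add_left, hGf2W1, hff2] at h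
    linarith
  -- coordinates in W
  have hcoords : ∀ w : Fin 4 → ℝ, om e w = 0 → om f w = 0 →
      w = om f2 w • e2 + (- om e2 w) • f2 := by
    intro w hw1 hw2
    set r : Fin 4 → ℝ := w - (om f2 w • e2 + (- om e2 w) • f2) with hrdef
    have hr1 : om e r = 0 := by
      rw [hrdef, om_sub_right, om_add_right, om_smul_right, om_smul_right, hee2, hef2, hw1]; ring
    have hr2 : om f r = 0 := by
      rw [hrdef, om_sub_right, om_add_right, om_smul_right, om_smul_right, hfe2, hff2, hw2]; ring
    have hr3 : om e2 r = 0 := by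
      rw [hrdef, om_sub_right, om_add_right, om_smul_right, om_smul_right, om_self, he2f2]; ring
    have hr4 : om f2 r = 0 := by
      rw [hrdef, om_sub_right, om_add_right, om_smul_right, om_smul_right, om_self, hf2e2]; ring
    have hQr : Qᵀ *ᵥ (J4 *ᵥ r) = 0 := by
      funext i
      have : (Qᵀ *ᵥ (J4 *ᵥ r)) i = om (fun a => Q a i) r := by
        simp only [om, Matrix.mulVec, dotProduct, Matrix.transpose_apply]
      rw [this]
      fin_cases i <;>
        simp only [hQcol, Matrix.cons_val_zero, Matrix.cons_val_one, Matrix.head_cons,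
          Matrix.cons_val_two, Matrix.tail_cons, Matrix.cons_val_three] <;>
      first
        | exact hr1 | exact hr2 | exact hr3 | exact hr4 | simp [hr1, hr2, hr3, hr4]
    have hJr : J4 *ᵥ r = 0 := by
      have hBtQt : Bᵀ * Qᵀ = 1 := by
        rw [← Matrix.transpose_mul, hQB, Matrix.transpose_one]
      calc J4 *ᵥ r = (Bᵀ * Qᵀ) *ᵥ (J4 *ᵥ r) := by rw [hBtQt]; simp
        _ = Bᵀ *ᵥ (Qᵀ *ᵥ (J4 *ᵥ r)) := by rw [← Matrix.mulVec_mulVec]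
        _ = 0 := by rw [hQr]; simp
    have : r = 0 := by
      have h1 : (J4 * J4) *ᵥ r = -r := by rw [J4_mul_J4]; simp [Matrix.neg_mulVec]
      rw [← Matrix.mulVec_mulVec, hJr] at h1
      simp at h1
      rw [← neg_neg r, ← h1]; simp
    rw [hrdef] at this
    exact sub_eq_zero.mp this
  set M : Matrix (Fin 2) (Fin 2) ℝ :=
    !![om f2 (G *ᵥ e2), om f2 (G *ᵥ f2); -om e2 (G *ᵥ e2), -om e2 (G *ᵥ f2)] with hMdef
  have hM00 : M 0 0 = om f2 (G *ᵥ e2) := by rw [hMdef]; simp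
  have hM01 : M 0 1 = om f2 (G *ᵥ f2) := by rw [hMdef]; simp
  have hM10 : M 1 0 = -om e2 (G *ᵥ e2) := by rw [hMdef]; simp
  have hM11 : M 1 1 = -om e2 (G *ᵥ f2) := by rw [hMdef]; simp
  have hGe2 : G *ᵥ e2 = M 0 0 • e2 + M 1 0 • f2 := by
    rw [hM00, hM10]; exact hcoords _ hGe2W1 hGe2W2
  have hGf2 : G *ᵥ f2 = M 0 1 • e2 + M 1 1 • f2 := by
    rw [hM01, hM11]; exact hcoords _ hGf2W1 hGf2W2
  have hdetM : M 0 0 * M 1 1 - M 0 1 * M 1 0 = 1 := by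
    have h := hpres e2 f2
    rw [hGe2, hGf2] at h
    simp only [om_add_left, om_add_right, om_smul_left, om_smul_right, om_self,
      he2f2, hf2e2] at h
    nlinarith [h]
  have hMsymp : Mᵀ * Jmat 1 * M = Jmat 1 := sp2_of_det M hdetM
  -- G * Q = Q * Nmat M
  have hQ0 : ∀ i, Q i 0 = e i := fun _ => rfl
  have hQ1 : ∀ i, Q i 1 = e2 i := fun _ => rfl
  have hQ2 : ∀ i, Q i 2 = f i := fun _ => rfl
  have hQ3 : ∀ i, Q i 3 = f2 i := fun _ => rfl
  have hGQ : G * Q = Q * Nmat M := by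
    ext i k
    fin_cases k
    · show (G *ᵥ e) i = (Q * Nmat M) i 0
      rw [hGe]
      simp [Matrix.mul_apply, Fin.sum_univ_four, Nmat, hQ0, hQ1, hQ2, hQ3,
        Matrix.vecHead, Matrix.vecTail, Function.comp]
    · show (G *ᵥ e2) i = (Q * Nmat M) i 1
      rw [hGe2]
      simp [Matrix.mul_apply, Fin.sum_univ_four, Nmat, hQ0, hQ1, hQ2, hQ3,
        Matrix.vecHead, Matrix.vecTail, Function.comp]
      ring
    · show (G *ᵥ f) i = (Q * Nmat M) i 2
      rw [hGf]
      simp [Matrix.mul_apply, Fin.sum_univ_four, Nmat, hQ0, hQ1, hQ2, hQ3,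
        Matrix.vecHead, Matrix.vecTail, Function.comp]
      ring
    · show (G *ᵥ f2) i = (Q * Nmat M) i 3
      rw [hGf2]
      simp [Matrix.mul_apply, Fin.sum_univ_four, Nmat, hQ0, hQ1, hQ2, hQ3,
        Matrix.vecHead, Matrix.vecTail, Function.comp]
      ring
  have hGform : G = Q * Nmat M * B := by
    calc G = G * (Q * B) := by rw [hQB, Matrix.mul_one]
      _ = (G * Q) * B := by rw [Matrix.mul_assoc]
      _ = Q * Nmat M * B := by rw [hGQ]
  -- B is symplectic
  have hJJ : ∀ W : Matrix (Fin 4) (Fin 4) ℝ, J4 * (J4 * W) = -W := by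
    intro W
    rw [← Matrix.mul_assoc, J4_mul_J4]
    simp
  have hQJQt : Q * J4 * Qᵀ = J4 := by
    have h1 : Q * ((-J4) * Qᵀ * J4) = 1 := by rw [← hBdef]; exact hQB
    have h2 : (Q * ((-J4) * Qᵀ)) * J4 = 1 := by
      rw [Matrix.mul_assoc] at h1 ⊢
      rw [← Matrix.mul_assoc (-J4) Qᵀ J4] at h1
      exact h1
    have h3 : (Q * ((-J4) * Qᵀ)) * (J4 * (-J4)) = 1 * (-J4) := by
      rw [← Matrix.mul_assoc, h2]
    have h4 : J4 * (-J4) = 1 := by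
      rw [Matrix.mul_neg, J4_mul_J4]; simp
    rw [h4, Matrix.mul_one, Matrix.one_mul] at h3
    have h5 : Q * ((-J4) * Qᵀ) = -(Q * J4 * Qᵀ) := by
      rw [Matrix.neg_mul, Matrix.mul_neg, Matrix.mul_assoc]
    rw [h5] at h3
    have := congrArg Neg.neg h3
    simpa using this
  have hBt : Bᵀ = -(J4 * (Q * J4)) := by
    simp [hBdef, Matrix.transpose_mul, J4_transpose, Matrix.mul_assoc]
  have hBsymp : Bᵀ * J4 * B = J4 := by
    rw [hBt, hBdef]
    simp only [Matrix.neg_mul, Matrix.mul_neg, neg_neg, Matrix.mul_assoc]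
    have inner1 : Qᵀ * J4 = Qᵀ * J4 := rfl
    -- reduce J4 * (J4 * (J4 * (Qᵀ * J4)))
    rw [hJJ (J4 * (Qᵀ * J4))]
    simp only [Matrix.mul_neg, neg_neg]
    -- goal should now be: J4 * (Q * (J4 * (Qᵀ * J4))) = J4  (up to sign)
    have h6 : Q * (J4 * (Qᵀ * J4)) = (Q * (J4 * Qᵀ)) * J4 := by
      simp only [Matrix.mul_assoc]
    have h7 : Q * (J4 * Qᵀ) = J4 := by rw [← Matrix.mul_assoc]; exact hQJQt
    rw [h6, h7, J4_mul_J4]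
    simp
  have hPinv : B⁻¹ = Q := Matrix.inv_eq_left_inv hQB
  refine ⟨B, M, hBsymp, hMsymp, ?_⟩
  rw [hPinv]
  exact hGform


lemma J4t_mul_J4 : J4ᵀ * J4 = 1 := by
  rw [J4_transpose, Matrix.neg_mul, J4_mul_J4]; simp

lemma tripleEntry (A B C : Matrix (Fin 4) (Fin 4) ℝ) (i k : Fin 4) :
    (Aᵀ * B * C) i k = ∑ b, ∑ a, A a i * B a b * C b k := by
  simp only [Matrix.mul_apply, Matrix.transpose_apply, Finset.sum_mul]

lemma tripleEntry' (C A D : Matrix (Fin 4) (Fin 4) ℝ) (k a : Fin 4) :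
    (C * Aᵀ * D) k a = ∑ q, ∑ p, C k p * A q p * D q a := by
  simp only [Matrix.mul_apply, Matrix.transpose_apply, Finset.sum_mul]

/-- derivative of each entry of `γᵀ J γ` -/
lemma path_symp (h : ℝ → Matrix (Fin 4) (Fin 4) ℝ) (hsym : ∀ t, (h t)ᵀ = h t)
    (γ : ℝ → Matrix (Fin 4) (Fin 4) ℝ) (hγ0 : γ 0 = 1)
    (hγd : ∀ (t : ℝ) (i k : Fin 4),
      HasDerivAt (fun s => γ s i k) ((J4 * h t * γ t) i k) t) :
    ∀ t, (γ t)ᵀ * J4 * γ t = J4 := by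
  have key : ∀ (t : ℝ) (i k : Fin 4),
      HasDerivAt (fun s => ((γ s)ᵀ * J4 * γ s) i k) 0 t := by
    intro t i k
    set γ' : Matrix (Fin 4) (Fin 4) ℝ := J4 * h t * γ t with hγ'def
    have hzero : (γ')ᵀ * J4 * γ t + (γ t)ᵀ * J4 * γ' = 0 := by
      have h1 : (γ')ᵀ * J4 * γ t = (γ t)ᵀ * h t * γ t := by
        rw [hγ'def, Matrix.transpose_mul, Matrix.transpose_mul]
        calc (γ t)ᵀ * ((h t)ᵀ * J4ᵀ) * J4 * γ t
            = (γ t)ᵀ * ((h t)ᵀ * (J4ᵀ * J4) * γ t) := by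
              simp only [Matrix.mul_assoc]
          _ = (γ t)ᵀ * h t * γ t := by rw [J4t_mul_J4, hsym]; simp [Matrix.mul_assoc]
      have h2 : (γ t)ᵀ * J4 * γ' = -((γ t)ᵀ * h t * γ t) := by
        rw [hγ'def]
        calc (γ t)ᵀ * J4 * (J4 * h t * γ t)
            = (γ t)ᵀ * (J4 * J4) * (h t * γ t) := by simp only [Matrix.mul_assoc]
          _ = -((γ t)ᵀ * h t * γ t) := by
              rw [J4_mul_J4]; simp [Matrix.mul_assoc]
      rw [h1, h2]; simp
    have hd : HasDerivAt (fun s => ((γ s)ᵀ * J4 * γ s) i k)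
        (((γ')ᵀ * J4 * γ t + (γ t)ᵀ * J4 * γ') i k) t := by
      have hfun : (fun s => ((γ s)ᵀ * J4 * γ s) i k)
          = fun s => ∑ b, ∑ a, γ s a i * J4 a b * γ s b k := by
        funext s; exact tripleEntry (γ s) J4 (γ s) i k
      rw [hfun]
      have hval : ((γ')ᵀ * J4 * γ t + (γ t)ᵀ * J4 * γ') i k
          = ∑ b, ∑ a, (γ' a i * J4 a b * γ t b k + γ t a i * J4 a b * γ' b k) := by
        have := tripleEntry γ' J4 (γ t) i k
        have h2 := tripleEntry (γ t) J4 γ' i k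
        rw [Matrix.add_apply, this, h2, ← Finset.sum_add_distrib]
        exact Finset.sum_congr rfl fun b _ => (Finset.sum_add_distrib).symm
      rw [hval]
      apply HasDerivAt.fun_sum
      intro b _
      apply HasDerivAt.fun_sum
      intro a _
      have hu : HasDerivAt (fun s => γ s a i * J4 a b) (γ' a i * J4 a b) t :=
        (hγd t a i).mul_const (J4 a b)
      have := hu.fun_mul (hγd t b k)
      convert this using 1 <;> ring
    have := hd
    rw [hzero] at this
    simpa using this
  intro t
  have hconst : ∀ i k, ((γ t)ᵀ * J4 * γ t) i k = ((γ 0)ᵀ * J4 * γ 0) i k := by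
    intro i k
    have hdiff : ∀ s, HasDerivAt (fun r => ((γ r)ᵀ * J4 * γ r) i k) 0 s := fun s => key s i k
    have := is_const_of_deriv_eq_zero (f := fun r => ((γ r)ᵀ * J4 * γ r) i k)
      (fun s => (hdiff s).differentiableAt) (fun s => (hdiff s).deriv) t 0
    exact this
  have : (γ t)ᵀ * J4 * γ t = (γ 0)ᵀ * J4 * γ 0 := by
    ext i k; exact hconst i k
  rw [this, hγ0]
  simp

lemma transport (h : ℝ → Matrix (Fin 4) (Fin 4) ℝ) (hsym : ∀ t, (h t)ᵀ = h t)
    (γ : ℝ → Matrix (Fin 4) (Fin 4) ℝ) (hγ0 : γ 0 = 1)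
    (hγd : ∀ (t : ℝ) (i k : Fin 4),
      HasDerivAt (fun s => γ s i k) ((J4 * h t * γ t) i k) t)
    (u : ℝ → Fin 4 → ℝ)
    (hud : ∀ (t : ℝ) (k : Fin 4),
      HasDerivAt (fun s => u s k) (((J4 * h t) *ᵥ u t) k) t) :
    ∀ t, u t = γ t *ᵥ u 0 := by
  have hsymp := path_symp h hsym γ hγ0 hγd
  have hJJ' : (-J4) * J4 = 1 := by rw [Matrix.neg_mul, J4_mul_J4]; simp
  -- B t is the inverse of γ t
  set B : ℝ → Matrix (Fin 4) (Fin 4) ℝ := fun t => (-J4) * (γ t)ᵀ * J4 with hBdef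
  have hBγ : ∀ t, B t * γ t = 1 := by
    intro t
    have h1 : B t * γ t = (-J4) * ((γ t)ᵀ * J4 * γ t) := by
      simp only [hBdef, Matrix.mul_assoc]
    rw [h1, hsymp t, hJJ']
  have hγB : ∀ t, γ t * B t = 1 := fun t => mul_eq_one_comm.mp (hBγ t)
  -- entry-level derivative of B
  have hBd : ∀ (t : ℝ) (k a : Fin 4),
      HasDerivAt (fun s => B s k a) (((-J4) * (J4 * h t * γ t)ᵀ * J4) k a) t := by
    intro t k a
    have hfun : (fun s => B s k a) = fun s => ∑ q, ∑ p, (-J4) k p * γ s q p * J4 q a := by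
      funext s; exact tripleEntry' (-J4) (γ s) J4 k a
    rw [hfun, tripleEntry' (-J4) (J4 * h t * γ t) J4 k a]
    apply HasDerivAt.fun_sum; intro q _
    apply HasDerivAt.fun_sum; intro p _
    have h1 := ((hγd t q p).const_mul ((-J4) k p)).mul_const (J4 q a)
    convert h1 using 1 <;> ring
  -- w = B t *ᵥ u t is constant
  have hwd : ∀ (t : ℝ) (k : Fin 4),
      HasDerivAt (fun s => (B s *ᵥ u s) k) 0 t := by
    intro t k
    set γ' : Matrix (Fin 4) (Fin 4) ℝ := J4 * h t * γ t with hγ'def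
    set B' : Matrix (Fin 4) (Fin 4) ℝ := (-J4) * (γ')ᵀ * J4 with hB'def
    have hzero : B' *ᵥ u t + B t *ᵥ ((J4 * h t) *ᵥ u t) = 0 := by
      have e1 : B' = (-J4) * (γ t)ᵀ * h t := by
        rw [hB'def, hγ'def]
        calc (-J4) * (J4 * h t * γ t)ᵀ * J4
            = (-J4) * ((γ t)ᵀ * ((h t)ᵀ * J4ᵀ)) * J4 := by
              rw [Matrix.transpose_mul, Matrix.transpose_mul]
          _ = (-J4) * ((γ t)ᵀ * ((h t)ᵀ * (J4ᵀ * J4))) := by simp only [Matrix.mul_assoc]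
          _ = (-J4) * (γ t)ᵀ * h t := by rw [J4t_mul_J4, hsym]; simp [Matrix.mul_assoc]
      have e2 : B t * (J4 * h t) = -((-J4) * (γ t)ᵀ * h t) := by
        calc B t * (J4 * h t) = (-J4) * (γ t)ᵀ * (J4 * (J4 * h t)) := by
              simp only [hBdef, Matrix.mul_assoc]
          _ = -((-J4) * (γ t)ᵀ * h t) := by
              rw [← Matrix.mul_assoc J4 J4 (h t), J4_mul_J4]
              simp [Matrix.mul_assoc]
      rw [Matrix.mulVec_mulVec, e2, e1, Matrix.neg_mulVec]
      simp
    have hd : HasDerivAt (fun s => (B s *ᵥ u s) k)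
        ((B' *ᵥ u t + B t *ᵥ ((J4 * h t) *ᵥ u t)) k) t := by
      have hfun : (fun s => (B s *ᵥ u s) k) = fun s => ∑ a, B s k a * u s a := by
        funext s; rfl
      have hval : (B' *ᵥ u t + B t *ᵥ ((J4 * h t) *ᵥ u t)) k
          = ∑ a, (B' k a * u t a + B t k a * ((J4 * h t) *ᵥ u t) a) := by
        simp only [Pi.add_apply, Matrix.mulVec, dotProduct, ← Finset.sum_add_distrib]
      rw [hfun, hval]
      apply HasDerivAt.fun_sum; intro a _
      exact (hBd t k a).mul (hud t a)
    rw [hzero] at hd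
    simpa using hd
  intro t
  have hwconst : ∀ k, (B t *ᵥ u t) k = (B 0 *ᵥ u 0) k := by
    intro k
    exact is_const_of_deriv_eq_zero (f := fun s => (B s *ᵥ u s) k)
      (fun s => (hwd s k).differentiableAt) (fun s => (hwd s k).deriv) t 0
  have hB0 : B 0 = 1 := by
    rw [hBdef]; simp only [hγ0, Matrix.transpose_one, Matrix.mul_one]; exact hJJ'
  have hw : B t *ᵥ u t = u 0 := by
    funext k; rw [hwconst k, hB0]; simp
  calc u t = (γ t * B t) *ᵥ u t := by rw [hγB t]; simp
    _ = γ t *ᵥ (B t *ᵥ u t) := by rw [← Matrix.mulVec_mulVec]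
    _ = γ t *ᵥ u 0 := by rw [hw]

abbrev E4 := EuclideanSpace ℝ (Fin 4)

lemma single_decomp (x : E4) : x = ∑ i, x i • EuclideanSpace.single i (1:ℝ) := by
  ext j
  rw [show (∑ i, x i • EuclideanSpace.single i (1:ℝ)) j
      = ∑ i, x i * EuclideanSpace.single i (1:ℝ) j from by
    rw [WithLp.ofLp_sum, Finset.sum_apply]; rfl]
  simp [EuclideanSpace.single_apply]

lemma clm_decomp (L : E4 →L[ℝ] ℝ) (x : E4) :
    L x = ∑ i, x i * L (EuclideanSpace.single i 1) := by
  conv_lhs => rw [single_decomp x]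
  rw [map_sum]
  exact Finset.sum_congr rfl fun i _ => by rw [_root_.map_smul]; rfl

lemma grad_coord (H : E4 → ℝ) (x : E4) (k : Fin 4) :
    gradient H x k = fderiv ℝ H x (EuclideanSpace.single k 1) := by
  have h1 : (inner ℝ (gradient H x) (EuclideanSpace.single k (1:ℝ)) : ℝ)
      = fderiv ℝ H x (EuclideanSpace.single k 1) := by
    rw [gradient]
    have := (InnerProductSpace.toDual ℝ E4).apply_symm_apply (fderiv ℝ H x)
    conv_rhs => rw [← this]
    rfl
  rw [← h1, EuclideanSpace.inner_single_right]
  simp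

lemma jmap_mulVec (x : E4) : (fun i => Jmap 2 x i) = J4 *ᵥ (fun a => x a) := by
  funext i
  fin_cases i <;>
    simp [Jmap, J4, Jmat, Matrix.mulVec, dotProduct, Fin.sum_univ_four,
      show ((3:Fin 4):ℕ) = 3 from rfl, show ((3:ℕ) - 2) = 1 from rfl] <;>
    first | rfl | norm_num

section Hlemmas
variable {j H : E4 → ℝ} {α : ℝ}

lemma jnonneg (hj : IsGauge 2 j) (x : E4) : 0 ≤ j x := by
  rcases eq_or_ne x 0 with h | h
  · rw [h, hj.2.2.1]
  · exact (hj.2.1 x h).le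

lemma contH (hj : IsGauge 2 j) (hH : ∀ x, H x = j x ^ α) {x : E4} (hx : x ≠ 0) :
    ContDiffAt ℝ 3 H x := by
  have hjx : ContDiffAt ℝ 3 j x :=
    hj.2.2.2.contDiffAt (isOpen_compl_singleton.mem_nhds (by simpa using hx))
  have hpos : j x ≠ 0 := ne_of_gt (hj.2.1 x hx)
  have h1 : ContDiffAt ℝ 3 (fun y => j y ^ α) x :=
    (Real.contDiffAt_rpow_const_of_ne hpos).comp x hjx
  have : H = fun y => j y ^ α := funext hH
  rwa [this]

lemma Hdiff (hj : IsGauge 2 j) (hH : ∀ x, H x = j x ^ α) {x : E4} (hx : x ≠ 0) :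
    DifferentiableAt ℝ H x :=
  (contH hj hH hx).differentiableAt (by norm_num)

lemma Hhomog (hj : IsGauge 2 j) (hH : ∀ x, H x = j x ^ α) {t : ℝ} (ht : 0 < t) (x : E4) :
    H (t • x) = t ^ α * H x := by
  rw [hH, hH, hj.1 t ht x, Real.mul_rpow ht.le (jnonneg hj x)]

lemma euler1 (hj : IsGauge 2 j) (hH : ∀ x, H x = j x ^ α) {x : E4} (hx : x ≠ 0) :
    fderiv ℝ H x x = α * H x := by
  have hsm : HasDerivAt (fun t : ℝ => t • x) x 1 := by
    have := (hasDerivAt_id (1:ℝ)).smul_const x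
    simpa using this
  have h1 : HasDerivAt (fun t : ℝ => H (t • x)) (fderiv ℝ H x x) 1 := by
    have hF : HasFDerivAt H (fderiv ℝ H x) ((fun t : ℝ => t • x) 1) := by
      simpa using (Hdiff hj hH hx).hasFDerivAt
    exact hF.comp_hasDerivAt 1 hsm
  have h2 : HasDerivAt (fun t : ℝ => t ^ α * H x) (α * H x) 1 := by
    have := (Real.hasDerivAt_rpow_const (x := (1:ℝ)) (p := α) (Or.inl one_ne_zero)).mul_const (H x)
    simpa using this
  have heq : (fun t : ℝ => H (t • x)) =ᶠ[nhds 1] fun t : ℝ => t ^ α * H x := by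
    filter_upwards [eventually_gt_nhds zero_lt_one] with t ht
    exact Hhomog hj hH ht x
  have h2' : HasDerivAt (fun t : ℝ => H (t • x)) (α * H x) 1 :=
    h2.congr_of_eventuallyEq heq
  exact h1.unique h2'

lemma gradscale (hj : IsGauge 2 j) (hH : ∀ x, H x = j x ^ α) {x : E4} (hx : x ≠ 0)
    {t : ℝ} (ht : 0 < t) :
    fderiv ℝ H (t • x) = (t ^ (α - 1)) • fderiv ℝ H x := by
  have htx : t • x ≠ 0 := smul_ne_zero (ne_of_gt ht) hx
  have hsm : HasFDerivAt (fun y : E4 => t • y) (t • ContinuousLinearMap.id ℝ E4) x := by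
    have := (t • ContinuousLinearMap.id ℝ E4).hasFDerivAt (x := x)
    exact this
  have h1 : HasFDerivAt (fun y => H (t • y))
      ((fderiv ℝ H (t • x)).comp (t • ContinuousLinearMap.id ℝ E4)) x :=
    (Hdiff hj hH htx).hasFDerivAt.comp x hsm
  have h2 : HasFDerivAt (fun y => H (t • y)) ((t ^ α) • fderiv ℝ H x) x := by
    have hmul : HasFDerivAt (fun y => t ^ α * H y) ((t ^ α) • fderiv ℝ H x) x :=
      (Hdiff hj hH hx).hasFDerivAt.const_mul (t ^ α)
    have : (fun y : E4 => H (t • y)) = fun y => t ^ α * H y :=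
      funext fun y => Hhomog hj hH ht y
    rwa [this]
  have hkey := h1.unique h2
  ext v
  have := congrFun (congrArg DFunLike.coe hkey) v
  simp only [ContinuousLinearMap.comp_apply, ContinuousLinearMap.smul_apply,
    ContinuousLinearMap.coe_smul', Pi.smul_apply, ContinuousLinearMap.id_apply,
    smul_eq_mul] at this ⊢
  have hmap : fderiv ℝ H (t • x) (t • v) = t * fderiv ℝ H (t • x) v := by
    rw [(fderiv ℝ H (t • x)).map_smul]; simp
  rw [hmap] at this
  have htne : t ≠ 0 := ne_of_gt ht
  have hpow : t ^ (α - 1) = t ^ α / t := by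
    rw [Real.rpow_sub ht, Real.rpow_one]
  rw [hpow]
  field_simp
  linarith [this]
end Hlemmas

section Hess
variable {j H : E4 → ℝ} {α : ℝ}

lemma ctwo (hj : IsGauge 2 j) (hH : ∀ x, H x = j x ^ α) {x : E4} (hx : x ≠ 0) :
    DifferentiableAt ℝ (fderiv ℝ H) x :=
  ((contH hj hH hx).fderiv_right (m := 2) (by norm_num)).differentiableAt (by norm_num)

lemma fderiv_gk (hj : IsGauge 2 j) (hH : ∀ x, H x = j x ^ α) {x : E4} (hx : x ≠ 0) (k : Fin 4) :
    fderiv ℝ (fun y => fderiv ℝ H y (EuclideanSpace.single k 1)) x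
      = (fderiv ℝ (fderiv ℝ H) x).flip (EuclideanSpace.single k 1) := by
  have h := fderiv_clm_apply (ctwo hj hH hx)
    (differentiableAt_const (EuclideanSpace.single k (1:ℝ)))
  simpa using h

lemma hess_entry (hj : IsGauge 2 j) (hH : ∀ x, H x = j x ^ α) {x : E4} (hx : x ≠ 0) (i k : Fin 4) :
    hessMatrix 4 H x i k
      = fderiv ℝ (fderiv ℝ H) x (EuclideanSpace.single i 1) (EuclideanSpace.single k 1) := by
  show fderiv ℝ (fun y => fderiv ℝ H y (EuclideanSpace.single k 1)) x (EuclideanSpace.single i 1)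
    = _
  rw [fderiv_gk hj hH hx k]
  rfl

lemma hess_symm (hj : IsGauge 2 j) (hH : ∀ x, H x = j x ^ α) {x : E4} (hx : x ≠ 0) (i k : Fin 4) :
    hessMatrix 4 H x i k = hessMatrix 4 H x k i := by
  rw [hess_entry hj hH hx, hess_entry hj hH hx]
  have hf : ∀ᶠ y in nhds x, HasFDerivAt H (fderiv ℝ H y) y := by
    have hev : ∀ᶠ y in nhds x, y ≠ 0 := isOpen_compl_singleton.eventually_mem (by simpa using hx)
    filter_upwards [hev] with y hy
    exact (Hdiff hj hH hy).hasFDerivAt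
  exact second_derivative_symmetric_of_eventually_of_real hf (ctwo hj hH hx).hasFDerivAt _ _

lemma hess_euler (hj : IsGauge 2 j) (hH : ∀ x, H x = j x ^ α) {x : E4} (hx : x ≠ 0) (k : Fin 4) :
    ∑ i, x i * hessMatrix 4 H x i k
      = (α - 1) * fderiv ℝ H x (EuclideanSpace.single k 1) := by
  set gk : E4 → ℝ := fun y => fderiv ℝ H y (EuclideanSpace.single k 1) with hgk
  have hgd : DifferentiableAt ℝ gk x :=
    (ctwo hj hH hx).clm_apply (differentiableAt_const _)
  have hsm : HasDerivAt (fun t : ℝ => t • x) x 1 := by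
    have := (hasDerivAt_id (1:ℝ)).smul_const x
    simpa using this
  have h1 : HasDerivAt (fun t : ℝ => gk (t • x)) (fderiv ℝ gk x x) 1 := by
    have hF : HasFDerivAt gk (fderiv ℝ gk x) ((fun t : ℝ => t • x) 1) := by
      simpa using hgd.hasFDerivAt
    exact hF.comp_hasDerivAt 1 hsm
  have h2 : HasDerivAt (fun t : ℝ => t ^ (α - 1) * gk x) ((α - 1) * gk x) 1 := by
    have := (Real.hasDerivAt_rpow_const (x := (1:ℝ)) (p := α - 1)
      (Or.inl one_ne_zero)).mul_const (gk x)
    simpa using this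
  have heq : (fun t : ℝ => gk (t • x)) =ᶠ[nhds 1] fun t : ℝ => t ^ (α - 1) * gk x := by
    filter_upwards [eventually_gt_nhds zero_lt_one] with t ht
    rw [hgk]
    simp only
    rw [gradscale hj hH hx ht]
    rfl
  have h2' : HasDerivAt (fun t : ℝ => gk (t • x)) ((α - 1) * gk x) 1 :=
    h2.congr_of_eventuallyEq heq
  have hval : fderiv ℝ gk x x = (α - 1) * gk x := h1.unique h2'
  rw [← hval, clm_decomp (fderiv ℝ gk x) x]
  exact Finset.sum_congr rfl fun i _ => rfl

lemma chain_rule (hj : IsGauge 2 j) (hH : ∀ x, H x = j x ^ α) {z : ℝ → E4} {w : E4} {t : ℝ}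
    (hzt : z t ≠ 0) (hzd : HasDerivAt z w t) (k : Fin 4) :
    HasDerivAt (fun s => fderiv ℝ H (z s) (EuclideanSpace.single k 1))
      (∑ i, w i * hessMatrix 4 H (z t) i k) t := by
  set gk : E4 → ℝ := fun y => fderiv ℝ H y (EuclideanSpace.single k 1) with hgk
  have hgd : DifferentiableAt ℝ gk (z t) :=
    (ctwo hj hH hzt).clm_apply (differentiableAt_const _)
  have h1 : HasDerivAt (fun s => gk (z s)) (fderiv ℝ gk (z t) w) t :=
    hgd.hasFDerivAt.comp_hasDerivAt t hzd
  have hval : fderiv ℝ gk (z t) w = ∑ i, w i * hessMatrix 4 H (z t) i k := by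
    rw [clm_decomp (fderiv ℝ gk (z t)) w]
    exact Finset.sum_congr rfl fun i _ => rfl
  rw [← hval]
  exact h1
end Hess

end MonodromyHelpers
open Matrix

/-- The monodromy matrix of the unique (up to iteration and geometric equivalence) closed
characteristic on a star-shaped hypersurface in `ℝ⁴` is symplectically conjugate to
`N₁(1,1) ⋄ M` for some `M ∈ Sp(2,ℝ)`. -/
theorem monodromy_normal_form_R4
    (j : EuclideanSpace ℝ (Fin 4) → ℝ) (hj : IsGauge 2 j)
    (α : ℝ) (hα1 : 1 < α) (hα2 : α < 2)
    (H : EuclideanSpace ℝ (Fin 4) → ℝ) (hH : ∀ x, H x = j x ^ α)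
    (σ : ℝ) (z : ℝ → EuclideanSpace ℝ (Fin 4))
    (hσ : 0 < σ)
    (hz : ∀ t : ℝ, HasDerivAt z (Jmap 2 (gradient H (z t))) t)
    (hz1 : ∀ t : ℝ, H (z t) = 1)
    (hzper : ∀ t : ℝ, z (t + σ) = z t)
    (γ : ℝ → Matrix (Fin 4) (Fin 4) ℝ)
    (hγ0 : γ 0 = 1)
    (hγ : ∀ (t : ℝ) (i k : Fin 4),
      HasDerivAt (fun s => γ s i k) ((Jmat 2 * hessMatrix 4 H (z t) * γ t) i k) t) :
    ∃ (P : Matrix (Fin 4) (Fin 4) ℝ) (M : Matrix (Fin 2) (Fin 2) ℝ),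
      IsSymplecticMat 2 P ∧ IsSymplecticMat 1 M ∧ γ σ = P⁻¹ * Nmat M * P := by
  classical
  have hα0 : (0:ℝ) < α := lt_trans one_pos hα1
  have hzne : ∀ t, z t ≠ 0 := by
    intro t h0
    have h1 := hz1 t
    rw [h0, hH 0, hj.2.2.1, Real.zero_rpow (ne_of_gt hα0)] at h1
    norm_num at h1
  -- coordinate functions
  set gv : ℝ → Fin 4 → ℝ :=
    fun t k => fderiv ℝ H (z t) (EuclideanSpace.single k 1) with hgv
  set v : ℝ → Fin 4 → ℝ := fun t => J4 *ᵥ gv t with hv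
  set hs : ℝ → Matrix (Fin 4) (Fin 4) ℝ := fun t => hessMatrix 4 H (z t) with hhs
  have hsym : ∀ t, (hs t)ᵀ = hs t := by
    intro t
    ext i k
    exact hess_symm hj hH (hzne t) k i
  have hγd : ∀ (t : ℝ) (i k : Fin 4),
      HasDerivAt (fun s => γ s i k) ((J4 * hs t * γ t) i k) t := fun t i k => hγ t i k
  -- the gradient coordinates of the ODE right-hand side
  have hweq : ∀ t (i : Fin 4), Jmap 2 (gradient H (z t)) i = v t i := by
    intro t i
    have h1 := congrFun (jmap_mulVec (gradient H (z t))) i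
    rw [h1, hv]
    have : (fun a => gradient H (z t) a) = gv t := by
      funext a; exact grad_coord H (z t) a
    rw [this]
  -- componentwise derivative of z
  have hzc : ∀ (t : ℝ) (k : Fin 4), HasDerivAt (fun s => z s k) (v t k) t := by
    intro t k
    have hp := (EuclideanSpace.proj (𝕜 := ℝ) k).hasFDerivAt
      (x := z t)
    have h1 := hp.comp_hasDerivAt t (hz t)
    have hval : (EuclideanSpace.proj (𝕜 := ℝ) k) (Jmap 2 (gradient H (z t))) = v t k :=
      hweq t k
    rw [hval] at h1
    exact h1
  -- derivative of v
  have hvd : ∀ (t : ℝ) (k : Fin 4),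
      HasDerivAt (fun s => v s k) (((J4 * hs t) *ᵥ v t) k) t := by
    intro t k
    have hfun : (fun s => v s k) = fun s => ∑ a, J4 k a * gv s a := by
      funext s; rfl
    have hval : ((J4 * hs t) *ᵥ v t) k
        = ∑ a, J4 k a * (∑ i, Jmap 2 (gradient H (z t)) i * hessMatrix 4 H (z t) i a) := by
      rw [← Matrix.mulVec_mulVec]
      show ∑ a, J4 k a * (hs t *ᵥ v t) a = _
      apply Finset.sum_congr rfl
      intro a _
      congr 1
      rw [show (hs t *ᵥ v t) a = ∑ i, hs t a i * v t i from rfl]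
      apply Finset.sum_congr rfl
      intro i _
      simp only [hhs]
      rw [hess_symm hj hH (hzne t) a i, hweq t i]
      ring
    rw [hfun, hval]
    apply HasDerivAt.fun_sum
    intro a _
    exact (chain_rule hj hH (hzne t) (hz t) a).const_mul (J4 k a)
  -- transport along γ
  have hsymp := path_symp hs hsym γ hγ0 hγd
  have hvtrans := transport hs hsym γ hγ0 hγd v hvd
  -- the auxiliary solution ξ
  set zc : ℝ → Fin 4 → ℝ := fun t i => z t i with hzcdef
  have hAz : ∀ t, (J4 * hs t) *ᵥ zc t = (α - 1) • v t := by
    intro t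
    funext k
    rw [← Matrix.mulVec_mulVec]
    show ∑ a, J4 k a * (hs t *ᵥ zc t) a = ((α - 1) • v t) k
    have hha : ∀ a, (hs t *ᵥ zc t) a = (α - 1) * gv t a := by
      intro a
      rw [show (hs t *ᵥ zc t) a = ∑ i, hs t a i * zc t i from rfl]
      rw [hgv]
      rw [← hess_euler hj hH (hzne t) a]
      apply Finset.sum_congr rfl
      intro i _
      simp only [hhs]
      rw [hess_symm hj hH (hzne t) a i]
      ring
    calc ∑ a, J4 k a * (hs t *ᵥ zc t) a
        = ∑ a, J4 k a * ((α - 1) * gv t a) := by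
          exact Finset.sum_congr rfl fun a _ => by rw [hha a]
      _ = (α - 1) * ∑ a, J4 k a * gv t a := by
          rw [Finset.mul_sum]
          exact Finset.sum_congr rfl fun a _ => by ring
      _ = ((α - 1) • v t) k := by
          rw [hv]
          simp [Matrix.mulVec, dotProduct]
  set ξ : ℝ → Fin 4 → ℝ := fun t => zc t + ((α - 2) * t) • v t with hξdef
  have hξd : ∀ (t : ℝ) (k : Fin 4),
      HasDerivAt (fun s => ξ s k) (((J4 * hs t) *ᵥ ξ t) k) t := by
    intro t k
    have h1 : HasDerivAt (fun s : ℝ => z s k + ((α - 2) * s) * v s k)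
        (v t k + (((α - 2) * 1) * v t k + ((α - 2) * t) * (((J4 * hs t) *ᵥ v t) k))) t := by
      exact (hzc t k).add (((hasDerivAt_id t).const_mul (α - 2)).mul (hvd t k))
    have hfun : (fun s => ξ s k) = fun s : ℝ => z s k + ((α - 2) * s) * v s k := by
      funext s
      rw [hξdef]
      simp [hzcdef]
    have hval : ((J4 * hs t) *ᵥ ξ t) k
        = v t k + (((α - 2) * 1) * v t k + ((α - 2) * t) * (((J4 * hs t) *ᵥ v t) k)) := by
      rw [hξdef]
      rw [show (J4 * hs t) *ᵥ (zc t + ((α - 2) * t) • v t)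
          = (J4 * hs t) *ᵥ zc t + ((α - 2) * t) • ((J4 * hs t) *ᵥ v t) by
        rw [Matrix.mulVec_add, Matrix.mulVec_smul]]
      rw [hAz t]
      simp only [Pi.add_apply, Pi.smul_apply, smul_eq_mul]
      ring
    rw [hfun, hval]
    exact h1
  have hξtrans := transport hs hsym γ hγ0 hγd ξ hξd
  -- periodicity
  have hz0 : z σ = z 0 := by
    have := hzper 0
    rwa [zero_add] at this
  have hgv0 : gv σ = gv 0 := by
    funext k; simp only [hgv]; rw [hz0]
  have hv0 : v σ = v 0 := by simp only [hv, hgv0]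
  have hγv : γ σ *ᵥ v 0 = v 0 := by
    rw [← hvtrans σ, hv0]
  have hξ0 : ξ 0 = zc 0 := by
    rw [hξdef]; simp
  have hγx : γ σ *ᵥ zc 0 = zc 0 + ((α - 2) * σ) • v 0 := by
    have h1 := hξtrans σ
    rw [hξ0] at h1
    rw [← h1]
    simp only [hξdef]
    have hzcσ : zc σ = zc 0 := by
      funext i; simp only [hzcdef]; rw [hz0]
    rw [hzcσ, hv0]
  -- the symplectic product ω(v 0, z 0) = α
  have homega : om (v 0) (zc 0) = α := by
    rw [om, hv, mulVec_dot J4 (gv 0) (J4 *ᵥ zc 0), Matrix.mulVec_mulVec, J4t_mul_J4,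
      Matrix.one_mulVec]
    have h1 : gv 0 ⬝ᵥ zc 0 = ∑ i, (z 0) i * fderiv ℝ H (z 0) (EuclideanSpace.single i 1) := by
      rw [dotProduct_comm]
      apply Finset.sum_congr rfl
      intro i _
      rw [hgv, hzcdef]
    rw [h1, ← clm_decomp (fderiv ℝ H (z 0)) (z 0), euler1 hj hH (hzne 0), hz1 0, mul_one]
  -- scalars
  set sc : ℝ := (α - 2) * σ with hscdef
  have hsneg : sc < 0 := mul_neg_of_neg_of_pos (by linarith) hσ
  have hsα : sc * α < 0 := mul_neg_of_neg_of_pos hsneg hα0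
  set μ : ℝ := Real.sqrt (-(1 / (sc * α))) with hμdef
  have hinner : (0:ℝ) < -(1 / (sc * α)) := by
    have : 1 / (sc * α) < 0 := div_neg_of_pos_of_neg one_pos hsα
    linarith
  have hμsq : μ * μ = -(1 / (sc * α)) := Real.mul_self_sqrt hinner.le
  set e : Fin 4 → ℝ := (μ * sc) • v 0 with hedef
  set f : Fin 4 → ℝ := μ • zc 0 with hfdef
  have hef : om e f = -1 := by
    rw [hedef, hfdef, om_smul_left, om_smul_right, homega]
    have hne : sc * α ≠ 0 := ne_of_lt hsα
    calc μ * sc * (μ * α) = (μ * μ) * (sc * α) := by ring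
      _ = -(1 / (sc * α)) * (sc * α) := by rw [hμsq]
      _ = -1 := by field_simp; rw [div_self (ne_of_lt hsneg)]
  have hGe : γ σ *ᵥ e = e := by
    rw [hedef, Matrix.mulVec_smul, hγv]
  have hGf : γ σ *ᵥ f = f + e := by
    rw [hfdef, Matrix.mulVec_smul, hγx, smul_add, hedef, smul_smul]
  obtain ⟨P, M, hP, hM, hPNP⟩ :=
    symp_normal_form (γ σ) (hsymp σ) e f hef hGe hGf
  exact ⟨P, M, hP, hM, hPNP⟩
end

section
/- Let p and q be coprime integers with 1 ≤ p < q, q ≥ 2 and 2p ≠ q, and set k₁ = q − 1 − p. Let M be the formal Laurent series over ℚ whose coefficient in degree d ∈ ℤ equals card{m ∈ ℕ : m ≥ 1, q ∤ m, 2·⌈m·p/q⌉ − 4 = d} + k₁ · card{j ∈ ℕ : j ≥ 1, 2·j·p − 3 = d} (both sets are finite for every d). Let P be the formal Laurent series with coefficient 1 in every even degree 2m, m ≥ 0, and 0 elsewhere. Then there is no formal Laurent series U with all coefficients nonnegative such that M − P = (1 + t)·U. -/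
private lemma sum_range_two_mul_aux (f : ℕ → ℚ) (n : ℕ) :
    ∑ i ∈ Finset.range (2*n), f i = ∑ j ∈ Finset.range n, (f (2*j) + f (2*j+1)) := by
  induction n with
  | zero => simp
  | succ n ih =>
    have h : 2*(n+1) = (2*n+1)+1 := by ring
    rw [h, Finset.sum_range_succ, Finset.sum_range_succ, Finset.sum_range_succ, ih, add_assoc]

/-- The concluding contradiction of Case 2: with `p, q` coprime, `1 ≤ p < q`, `q ≥ 2`,
`2p ≠ q`, and `k₁ = q - 1 - p`, the formal Laurent series `M` whose coefficient in degree `d`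
is `#{m ≥ 1 : q ∤ m, 2⌈mp/q⌉ - 4 = d} + k₁·#{m ≥ 1 : 2mp - 3 = d}` cannot satisfy
`M - ∑_{m ≥ 0} t^{2m} = (1 + t)·U` with `U` having nonnegative coefficients. -/
theorem case_2_series_contradiction
    (p q : ℕ) (hcop : Nat.Coprime p q) (hp : 1 ≤ p) (hpq : p < q) (hq : 2 ≤ q)
    (hne : 2 * p ≠ q)
    (k₁ : ℕ) (hk₁ : k₁ = q - 1 - p)
    (M P : LaurentSeries ℚ)
    (hM : ∀ d : ℤ, M.coeff d =
      (Set.ncard {m : ℕ | 1 ≤ m ∧ ¬ (q ∣ m) ∧ 2 * ⌈((m : ℚ) * (p : ℚ)) / (q : ℚ)⌉ - 4 = d} : ℚ)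
        + (k₁ : ℚ) * (Set.ncard {m : ℕ | 1 ≤ m ∧ 2 * (m : ℤ) * (p : ℤ) - 3 = d} : ℚ))
    (hP : ∀ d : ℤ, P.coeff d = if 0 ≤ d ∧ Even d then 1 else 0) :
    ¬ ∃ U : LaurentSeries ℚ, (∀ d : ℤ, 0 ≤ U.coeff d) ∧
        M - P = (1 + HahnSeries.single (1 : ℤ) (1 : ℚ)) * U := by
  rintro ⟨U, hU, heq⟩
  have hq0 : (0:ℚ) < (q:ℚ) := by exact_mod_cast lt_of_lt_of_le two_pos hq
  have hp0 : (0:ℚ) < (p:ℚ) := by exact_mod_cast hp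
  -- basic ceiling facts
  have hc1 : ∀ m : ℕ, 1 ≤ m → 1 ≤ ⌈((m : ℚ) * (p : ℚ)) / (q : ℚ)⌉ := by
    intro m hm
    have hm0 : (0:ℚ) < (m:ℚ) := by exact_mod_cast hm
    exact Int.ceil_pos.mpr (div_pos (mul_pos hm0 hp0) hq0)
  have hcle : ∀ m : ℕ, m ≤ q → ⌈((m : ℚ) * (p : ℚ)) / (q : ℚ)⌉ ≤ (p : ℤ) := by
    intro m hm
    rw [Int.ceil_le]
    rw [div_le_iff₀ hq0]
    push_cast
    have : (m:ℚ) ≤ (q:ℚ) := by exact_mod_cast hm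
    nlinarith
  have hmleq : ∀ m : ℕ, ⌈((m : ℚ) * (p : ℚ)) / (q : ℚ)⌉ ≤ (p : ℤ) → m ≤ q := by
    intro m hm
    have h1 : ((m : ℚ) * (p : ℚ)) / (q : ℚ) ≤ (p : ℚ) := by
      calc ((m : ℚ) * (p : ℚ)) / (q : ℚ) ≤ (⌈((m : ℚ) * (p : ℚ)) / (q : ℚ)⌉ : ℚ) := Int.le_ceil _
        _ ≤ (p : ℚ) := by exact_mod_cast hm
    rw [div_le_iff₀ hq0] at h1
    have h2 : (m : ℚ) ≤ (q : ℚ) := by nlinarith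
    exact_mod_cast h2
  -- the coefficient recursion
  have hrel : ∀ d : ℤ, (M - P).coeff d = U.coeff d + U.coeff (d - 1) := by
    intro d
    rw [heq, add_mul, one_mul, HahnSeries.coeff_add]
    congr 1
    have h := HahnSeries.coeff_single_mul_add (r := (1:ℚ)) (x := U) (a := d - 1) (b := (1:ℤ))
    rw [sub_add_cancel] at h
    rw [h, one_mul]
  -- M - P vanishes below -2
  have hMP0 : ∀ d : ℤ, d < -2 → (M - P).coeff d = 0 := by
    intro d hd
    rw [HahnSeries.coeff_sub, hM d, hP d]
    have h1 : {m : ℕ | 1 ≤ m ∧ ¬ (q ∣ m) ∧ 2 * ⌈((m : ℚ) * (p : ℚ)) / (q : ℚ)⌉ - 4 = d} = ∅ := by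
      ext m
      simp only [Set.mem_setOf_eq, Set.mem_empty_iff_false, iff_false, not_and]
      intro h1 _ h3
      have := hc1 m h1
      omega
    have h2 : {m : ℕ | 1 ≤ m ∧ 2 * (m : ℤ) * (p : ℤ) - 3 = d} = ∅ := by
      ext m
      simp only [Set.mem_setOf_eq, Set.mem_empty_iff_false, iff_false, not_and]
      intro h1 h3
      have hm : (1:ℤ) ≤ (m:ℤ) := by exact_mod_cast h1
      have hpz : (1:ℤ) ≤ (p:ℤ) := by exact_mod_cast hp
      have h5 : (1:ℤ) * 1 ≤ (m:ℤ) * (p:ℤ) :=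
        mul_le_mul hm hpz (by norm_num) (by linarith)
      rw [mul_assoc] at h3
      generalize (m:ℤ) * (p:ℤ) = K at h3 h5
      omega
    rw [h1, h2]
    simp only [Set.ncard_empty, Nat.cast_zero, mul_zero, add_zero]
    rw [if_neg (by omega : ¬ ((0:ℤ) ≤ d ∧ Even d))]
    ring
  -- U vanishes below -2
  have hU0 : ∀ d : ℤ, d ≤ -3 → U.coeff d = 0 := by
    intro d hd
    by_contra h0
    have hUne : U ≠ 0 := by
      intro h; rw [h] at h0; simp at h0
    have ho : U.order ≤ d := HahnSeries.order_le_of_coeff_ne_zero h0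
    have h1 : U.coeff (U.order - 1) = 0 :=
      HahnSeries.coeff_eq_zero_of_lt_order (by omega)
    have h2 := hrel U.order
    rw [h1, add_zero, hMP0 U.order (by omega)] at h2
    exact hUne (HahnSeries.coeff_order_eq_zero.mp h2.symm)
  -- alternating sum formula
  have key : ∀ n : ℕ, U.coeff (-2 + (n:ℤ)) =
      ∑ i ∈ Finset.range (n+1), (-1:ℚ)^(n-i) * (M - P).coeff (-2 + (i:ℤ)) := by
    intro n
    induction n with
    | zero =>
      have h := hrel (-2)
      rw [hU0 (-2-1) (by norm_num)] at h
      simpa using h.symm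
    | succ n ih =>
      have h := hrel (-2 + ((n:ℤ)+1))
      have he : (-2 + ((n:ℤ)+1)) - 1 = -2 + (n:ℤ) := by ring
      rw [he] at h
      have hsum : ∑ i ∈ Finset.range (n+2), (-1:ℚ)^(n+1-i) * (M - P).coeff (-2 + (i:ℤ))
          = (M - P).coeff (-2 + ((n:ℤ)+1))
            - ∑ i ∈ Finset.range (n+1), (-1:ℚ)^(n-i) * (M - P).coeff (-2 + (i:ℤ)) := by
        rw [Finset.sum_range_succ]
        have h1 : (-1:ℚ)^(n+1-(n+1)) = 1 := by simp
        have h2 : ∑ i ∈ Finset.range (n+1), (-1:ℚ)^(n+1-i) * (M - P).coeff (-2 + (i:ℤ))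
            = - ∑ i ∈ Finset.range (n+1), (-1:ℚ)^(n-i) * (M - P).coeff (-2 + (i:ℤ)) := by
          rw [← Finset.sum_neg_distrib]
          apply Finset.sum_congr rfl
          intro i hi
          have hi' : i ≤ n := by simpa [Nat.lt_succ_iff] using hi
          have : n + 1 - i = (n - i) + 1 := by omega
          rw [this, pow_succ]
          ring
        rw [h1, h2]
        push_cast
        ring
      have hcast : ((n+1 : ℕ) : ℤ) = (n:ℤ) + 1 := by push_cast; ring
      rw [hcast, hsum, h, ih]
      ring
  -- Evaluate the alternating sum at degree -2 + (2p - 1)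
  have hA : ∑ j ∈ Finset.range p,
      ((Set.ncard {m : ℕ | 1 ≤ m ∧ ¬ (q ∣ m) ∧
        2 * ⌈((m : ℚ) * (p : ℚ)) / (q : ℚ)⌉ - 4 = -2 + (2*(j:ℤ))} : ℕ) : ℚ)
      = (q : ℚ) - 1 := by
    have hset : ∀ j ∈ Finset.range p,
        {m : ℕ | 1 ≤ m ∧ ¬ (q ∣ m) ∧ 2 * ⌈((m : ℚ) * (p : ℚ)) / (q : ℚ)⌉ - 4 = -2 + (2*(j:ℤ))}
        = ↑((Finset.Icc 1 (q-1)).filter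
            (fun m : ℕ => (⌈((m : ℚ) * (p : ℚ)) / (q : ℚ)⌉ - 1).toNat = j)) := by
      intro j hj
      have hjp : j < p := Finset.mem_range.mp hj
      ext m
      simp only [Set.mem_setOf_eq, Finset.coe_filter, Finset.mem_Icc]
      constructor
      · rintro ⟨h1, h2, h3⟩
        have hge := hc1 m h1
        have hcm : ⌈((m : ℚ) * (p : ℚ)) / (q : ℚ)⌉ = (j:ℤ) + 1 := by omega
        have hle : m ≤ q := hmleq m (by rw [hcm]; exact_mod_cast by omega)
        have hne' : m ≠ q := by rintro rfl; exact h2 dvd_rfl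
        exact ⟨⟨h1, by omega⟩, by omega⟩
      · rintro ⟨⟨h1, h2⟩, h3⟩
        have hge := hc1 m h1
        refine ⟨h1, ?_, by omega⟩
        intro hdvd
        have := Nat.le_of_dvd (by omega) hdvd
        omega
    calc ∑ j ∈ Finset.range p,
        ((Set.ncard {m : ℕ | 1 ≤ m ∧ ¬ (q ∣ m) ∧
          2 * ⌈((m : ℚ) * (p : ℚ)) / (q : ℚ)⌉ - 4 = -2 + (2*(j:ℤ))} : ℕ) : ℚ)
        = ∑ j ∈ Finset.range p, (((Finset.Icc 1 (q-1)).filter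
            (fun m : ℕ => (⌈((m : ℚ) * (p : ℚ)) / (q : ℚ)⌉ - 1).toNat = j)).card : ℚ) := by
          apply Finset.sum_congr rfl
          intro j hj
          rw [hset j hj, Set.ncard_coe_finset]
      _ = ((Finset.Icc 1 (q-1)).card : ℚ) := by
          rw [← Nat.cast_sum]
          congr 1
          symm
          apply Finset.card_eq_sum_card_fiberwise
          intro m hm
          rw [Finset.mem_coe, Finset.mem_Icc] at hm
          simp only [Finset.mem_coe, Finset.mem_range]
          have hge := hc1 m hm.1
          have hle := hcle m (by omega)
          omega
      _ = (q : ℚ) - 1 := by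
          rw [Nat.card_Icc]
          have : q - 1 + 1 - 1 = q - 1 := by omega
          rw [this]
          push_cast [Nat.cast_sub (by omega : 1 ≤ q)]
          ring
  -- the main negative coefficient
  have hneg : U.coeff (-2 + ((2*p-1 : ℕ) : ℤ)) = -1 := by
    rw [key (2*p-1)]
    have h2p : 2*p-1+1 = 2*p := by omega
    rw [h2p, sum_range_two_mul_aux]
    have hterm : ∀ j ∈ Finset.range p,
        ((-1:ℚ)^(2*p-1-2*j) * (M - P).coeff (-2 + ((2*j : ℕ):ℤ))
          + (-1:ℚ)^(2*p-1-(2*j+1)) * (M - P).coeff (-2 + ((2*j+1 : ℕ):ℤ)))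
        = -((Set.ncard {m : ℕ | 1 ≤ m ∧ ¬ (q ∣ m) ∧
              2 * ⌈((m : ℚ) * (p : ℚ)) / (q : ℚ)⌉ - 4 = -2 + (2*(j:ℤ))} : ℕ) : ℚ)
          + (if j = 0 then 0 else 1)
          + (k₁ : ℚ) * (if j = p - 1 then 1 else 0) := by
      intro j hj
      have hjp : j < p := Finset.mem_range.mp hj
      have hsign1 : (-1:ℚ)^(2*p-1-2*j) = -1 := by
        have : 2*p-1-2*j = 2*(p-1-j)+1 := by omega
        rw [this, pow_succ, pow_mul]
        norm_num
      have hsign2 : (-1:ℚ)^(2*p-1-(2*j+1)) = 1 := by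
        have : 2*p-1-(2*j+1) = 2*(p-1-j) := by omega
        rw [this, pow_mul]
        norm_num
      rw [hsign1, hsign2, HahnSeries.coeff_sub, HahnSeries.coeff_sub,
        hM, hM, hP, hP]
      -- even degree: B-set empty
      have hBeven : {m : ℕ | 1 ≤ m ∧ 2 * (m : ℤ) * (p : ℤ) - 3 = -2 + ((2*j : ℕ):ℤ)} = ∅ := by
        ext m
        simp only [Set.mem_setOf_eq, Set.mem_empty_iff_false, iff_false, not_and]
        intro h1 h3
        push_cast at h3
        rw [mul_assoc] at h3
        generalize (m:ℤ) * (p:ℤ) = K at h3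
        omega
      -- odd degree: A-set empty
      have hAodd : {m : ℕ | 1 ≤ m ∧ ¬ (q ∣ m) ∧
          2 * ⌈((m : ℚ) * (p : ℚ)) / (q : ℚ)⌉ - 4 = -2 + ((2*j+1 : ℕ):ℤ)} = ∅ := by
        ext m
        simp only [Set.mem_setOf_eq, Set.mem_empty_iff_false, iff_false, not_and]
        intro _ _ h3
        push_cast at h3
        omega
      -- odd degree B-set
      have hBodd : ((Set.ncard {m : ℕ | 1 ≤ m ∧ 2 * (m : ℤ) * (p : ℤ) - 3
          = -2 + ((2*j+1 : ℕ):ℤ)} : ℕ) : ℚ) = if j = p - 1 then 1 else 0 := by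
        by_cases hcase : j = p - 1
        · subst hcase
          rw [if_pos rfl]
          have : {m : ℕ | 1 ≤ m ∧ 2 * (m : ℤ) * (p : ℤ) - 3 = -2 + ((2*(p-1)+1 : ℕ):ℤ)} = {1} := by
            ext m
            simp only [Set.mem_setOf_eq, Set.mem_singleton_iff]
            constructor
            · rintro ⟨h1, h2⟩
              push_cast at h2
              have hm : (1:ℤ) ≤ (m:ℤ) := by exact_mod_cast h1
              have hpz : (1:ℤ) ≤ (p:ℤ) := by exact_mod_cast hp
              have hp1 : ((p:ℤ) - 1 : ℤ) = ((p - 1 : ℕ) : ℤ) := by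
                push_cast [Nat.cast_sub hp]; ring
              -- h2 : 2 * m * p - 3 = -2 + (2*(p-1)+1)
              have hmp : (m:ℤ) * (p:ℤ) = (p:ℤ) := by
                rw [← hp1] at h2
                linarith
              have : (m:ℤ) = 1 := by
                have hpne : (p:ℤ) ≠ 0 := by omega
                exact mul_right_cancel₀ hpne (by linarith : (m:ℤ) * (p:ℤ) = 1 * (p:ℤ))
              exact_mod_cast this
            · rintro rfl
              refine ⟨le_refl 1, ?_⟩
              push_cast [Nat.cast_sub hp]
              ring
          rw [this, Set.ncard_singleton]
          norm_num
        · rw [if_neg hcase]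
          have : {m : ℕ | 1 ≤ m ∧ 2 * (m : ℤ) * (p : ℤ) - 3 = -2 + ((2*j+1 : ℕ):ℤ)} = ∅ := by
            ext m
            simp only [Set.mem_setOf_eq, Set.mem_empty_iff_false, iff_false, not_and]
            intro h1 h2
            push_cast at h2
            have hm : (1:ℤ) ≤ (m:ℤ) := by exact_mod_cast h1
            have hpz : (1:ℤ) ≤ (p:ℤ) := by exact_mod_cast hp
            have hjlt : (j:ℤ) + 1 < (p:ℤ) := by
              have : j + 1 < p := by omega
              exact_mod_cast this
            have hmp : (m:ℤ) * (p:ℤ) = (j:ℤ) + 1 := by linarith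
            have : (p:ℤ) ≤ (m:ℤ) * (p:ℤ) := le_mul_of_one_le_left (by omega) hm
            omega
          rw [this, Set.ncard_empty]
          norm_num
      -- P at even degree
      have hPeven : (if (0:ℤ) ≤ -2 + ((2*j : ℕ):ℤ) ∧ Even (-2 + ((2*j : ℕ):ℤ)) then (1:ℚ) else 0)
          = if j = 0 then 0 else 1 := by
        by_cases hcase : j = 0
        · subst hcase
          rw [if_pos rfl, if_neg]
          rintro ⟨habs, -⟩
          omega
        · rw [if_neg hcase, if_pos]
          constructor
          · push_cast; omega
          · refine ⟨(j:ℤ) - 1, ?_⟩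
            push_cast
            ring
      -- P at odd degree
      have hPodd : (if (0:ℤ) ≤ -2 + ((2*j+1 : ℕ):ℤ) ∧ Even (-2 + ((2*j+1 : ℕ):ℤ))
          then (1:ℚ) else 0) = 0 := by
        rw [if_neg]
        rintro ⟨-, r, hr⟩
        push_cast at hr
        omega
      rw [hBeven, hAodd, hBodd, hPeven, hPodd]
      simp only [Set.ncard_empty, Nat.cast_zero, mul_zero, add_zero, zero_add]
      have hcast2 : ((2*j : ℕ):ℤ) = 2*(j:ℤ) := by push_cast; ring
      rw [hcast2]
      ring
    rw [Finset.sum_congr rfl hterm]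
    rw [Finset.sum_add_distrib, Finset.sum_add_distrib, Finset.sum_neg_distrib, hA]
    have hs1 : ∑ j ∈ Finset.range p, (if j = 0 then (0:ℚ) else 1) = (p:ℚ) - 1 := by
      have h0 : ∀ j : ℕ, (if j = 0 then (0:ℚ) else 1) = 1 - (if j = 0 then 1 else 0) := by
        intro j; by_cases h : j = 0 <;> simp [h]
      rw [Finset.sum_congr rfl (fun j _ => h0 j), Finset.sum_sub_distrib,
        Finset.sum_const, Finset.sum_ite_eq' (Finset.range p) 0 (fun _ => (1:ℚ)),
        if_pos (Finset.mem_range.mpr (by omega))]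
      simp
    have hs2 : ∑ j ∈ Finset.range p, (k₁ : ℚ) * (if j = p - 1 then 1 else 0) = (k₁ : ℚ) := by
      rw [← Finset.mul_sum,
        Finset.sum_ite_eq' (Finset.range p) (p-1) (fun _ => (1:ℚ)),
        if_pos (Finset.mem_range.mpr (by omega))]
      ring
    rw [hs1, hs2, hk₁]
    push_cast [Nat.cast_sub (by omega : p ≤ q - 1), Nat.cast_sub (by omega : 1 ≤ q)]
    ring
  have := hU (-2 + ((2*p-1 : ℕ) : ℤ))
  rw [hneg] at this
  norm_num at this
end
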